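/- arXiv:2503.08862 — 2 statements merged into one kernel-verified Lean document; each statement's English description precedes it below -/
import Mathlib

section
/- Let (X,d) be a metric space with finite diameter, let μ, ν be Radon probability measures on X with finite first moment, and let σ be a partial transport plan between μ and ν (a Radon measure on X × X whose marginals are dominated setwise by μ and ν respectively). Then σ can be extended to a full transport plan σ̃ between μ and ν (i.e., σ̃ ≥ σ and σ̃ has marginals exactly μ and ν) whose cost satisfies cost(σ̃) ≤ cost(σ) + (1 − mass(σ)) · diam(X), where cost(τ) = ∫_{X×X} d(x,y) dτ and mass(σ) = σ(X × X). -/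
open MeasureTheory
open scoped ENNReal

noncomputable section

lemma aux_eq_of_le {X : Type*} [MeasurableSpace X] (μ ν : Measure X) [IsFiniteMeasure ν]
    (h : ν ≤ μ) (hu : μ Set.univ ≤ ν Set.univ) : ν = μ := by
  have h1 : (μ - ν) Set.univ = 0 := by
    rw [Measure.sub_apply MeasurableSet.univ h]
    exact tsub_eq_zero_of_le hu
  have h2 : μ - ν = 0 := Measure.measure_univ_eq_zero.mp h1
  have h3 := Measure.sub_add_cancel_of_le h
  rw [h2, zero_add] at h3
  exact h3

/-- Extension of a partial transport plan to a full transport plan: if `X` has finite diameter,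
`μ, ν` are probability measures on `X` with finite first moment, and `σ` is a partial transport
plan between `μ` and `ν` (its marginals are setwise dominated by `μ` and `ν`), then `σ` extends
to a transport plan `σ̃` between `μ` and `ν` with
`cost(σ̃) ≤ cost(σ) + (1 − mass(σ)) ⬝ diam(X)`. -/
theorem stmt1 {X : Type*} [MetricSpace X] [MeasurableSpace X] [BorelSpace X]
    (hdiam : EMetric.diam (Set.univ : Set X) ≠ ⊤)
    (μ ν : Measure X) [IsProbabilityMeasure μ] [IsProbabilityMeasure ν]
    (hμmom : ∃ y : X, ∫⁻ x, edist x y ∂μ ≠ ⊤) (hνmom : ∃ y : X, ∫⁻ x, edist x y ∂ν ≠ ⊤)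
    (σ : Measure (X × X))
    (hσ1 : ∀ E : Set X, MeasurableSet E → σ (E ×ˢ (Set.univ : Set X)) ≤ μ E)
    (hσ2 : ∀ E : Set X, MeasurableSet E → σ ((Set.univ : Set X) ×ˢ E) ≤ ν E) :
    ∃ σt : Measure (X × X), σ ≤ σt ∧
      σt.map Prod.fst = μ ∧ σt.map Prod.snd = ν ∧
      ∫⁻ p, edist p.1 p.2 ∂σt ≤ ∫⁻ p, edist p.1 p.2 ∂σ +
        (1 - σ Set.univ) * EMetric.diam (Set.univ : Set X) := by
  have huniv : (Set.univ : Set (X × X)) = (Set.univ : Set X) ×ˢ (Set.univ : Set X) :=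
    (Set.univ_prod_univ).symm
  have hm1 : σ Set.univ ≤ 1 := by
    rw [huniv]
    simpa using hσ1 Set.univ MeasurableSet.univ
  haveI : IsFiniteMeasure σ := ⟨lt_of_le_of_lt hm1 ENNReal.one_lt_top⟩
  set μ₁ : Measure X := σ.map Prod.fst with hμ₁def
  set ν₁ : Measure X := σ.map Prod.snd with hν₁def
  haveI : IsFiniteMeasure μ₁ := by rw [hμ₁def]; infer_instance
  haveI : IsFiniteMeasure ν₁ := by rw [hν₁def]; infer_instance
  have hμ₁univ : μ₁ Set.univ = σ Set.univ := by
    rw [hμ₁def, Measure.map_apply measurable_fst MeasurableSet.univ, Set.preimage_univ]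
  have hν₁univ : ν₁ Set.univ = σ Set.univ := by
    rw [hν₁def, Measure.map_apply measurable_snd MeasurableSet.univ, Set.preimage_univ]
  have hfstpre : ∀ s : Set X, (Prod.fst ⁻¹' s : Set (X × X)) = s ×ˢ Set.univ := by
    intro s; ext ⟨a, b⟩; simp
  have hsndpre : ∀ s : Set X, (Prod.snd ⁻¹' s : Set (X × X)) = Set.univ ×ˢ s := by
    intro s; ext ⟨a, b⟩; simp
  have hμ₁le : μ₁ ≤ μ := by
    rw [Measure.le_iff]
    intro s hs
    rw [hμ₁def, Measure.map_apply measurable_fst hs, hfstpre]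
    exact hσ1 s hs
  have hν₁le : ν₁ ≤ ν := by
    rw [Measure.le_iff]
    intro s hs
    rw [hν₁def, Measure.map_apply measurable_snd hs, hsndpre]
    exact hσ2 s hs
  rcases eq_or_lt_of_le hm1 with hm | hm
  · -- σ already has full mass
    refine ⟨σ, le_rfl, ?_, ?_, ?_⟩
    · exact aux_eq_of_le μ μ₁ hμ₁le (by rw [hμ₁univ, hm, measure_univ])
    · exact aux_eq_of_le ν ν₁ hν₁le (by rw [hν₁univ, hm, measure_univ])
    · exact le_add_right le_rfl
  · -- σ has mass < 1
    set r : ℝ≥0∞ := 1 - σ Set.univ with hrdef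
    have hr0 : r ≠ 0 := by
      rw [hrdef]
      exact (tsub_pos_of_lt hm).ne'
    have hrle : r ≤ 1 := by rw [hrdef]; exact tsub_le_self
    have hrtop : r ≠ ⊤ := (lt_of_le_of_lt hrle ENNReal.one_lt_top).ne
    set μ' : Measure X := μ - μ₁ with hμ'def
    set ν' : Measure X := ν - ν₁ with hν'def
    have hμ'univ : μ' Set.univ = r := by
      rw [hμ'def, Measure.sub_apply MeasurableSet.univ hμ₁le, hμ₁univ, measure_univ]
    have hν'univ : ν' Set.univ = r := by
      rw [hν'def, Measure.sub_apply MeasurableSet.univ hν₁le, hν₁univ, measure_univ]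
    haveI : IsFiniteMeasure μ' := by rw [hμ'def]; infer_instance
    haveI : IsFiniteMeasure ν' := by rw [hν'def]; infer_instance
    refine ⟨σ + r⁻¹ • (μ'.prod ν'), Measure.le_add_right le_rfl, ?_, ?_, ?_⟩
    · rw [Measure.map_add _ _ measurable_fst, Measure.map_smul,
        Measure.map_fst_prod, hν'univ, smul_smul, ENNReal.inv_mul_cancel hr0 hrtop,
        one_smul, ← hμ₁def]
      rw [add_comm]
      exact Measure.sub_add_cancel_of_le hμ₁le
    · rw [Measure.map_add _ _ measurable_snd, Measure.map_smul,
        Measure.map_snd_prod, hμ'univ, smul_smul, ENNReal.inv_mul_cancel hr0 hrtop,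
        one_smul, ← hν₁def]
      rw [add_comm]
      exact Measure.sub_add_cancel_of_le hν₁le
    · rw [lintegral_add_measure, lintegral_smul_measure]
      refine add_le_add le_rfl ?_
      have hbd : ∫⁻ p : X × X, edist p.1 p.2 ∂(μ'.prod ν') ≤
          EMetric.diam (Set.univ : Set X) * (r * r) := by
        calc ∫⁻ p : X × X, edist p.1 p.2 ∂(μ'.prod ν')
            ≤ ∫⁻ _p : X × X, EMetric.diam (Set.univ : Set X) ∂(μ'.prod ν') := by
              refine lintegral_mono fun p => ?_
              exact EMetric.edist_le_diam_of_mem (Set.mem_univ _) (Set.mem_univ _)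
          _ = EMetric.diam (Set.univ : Set X) * (μ'.prod ν') Set.univ := lintegral_const _
          _ = EMetric.diam (Set.univ : Set X) * (r * r) := by
              rw [huniv, Measure.prod_prod, hμ'univ, hν'univ]
      calc r⁻¹ * ∫⁻ p : X × X, edist p.1 p.2 ∂(μ'.prod ν')
            ≤ r⁻¹ * (EMetric.diam (Set.univ : Set X) * (r * r)) := by gcongr
          _ = r * EMetric.diam (Set.univ : Set X) := by
              rw [mul_comm (EMetric.diam _), ← mul_assoc, ← mul_assoc,
                ENNReal.inv_mul_cancel hr0 hrtop, one_mul, mul_comm]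

end
end

section
/- Let X and Y be metric spaces, let K and L be simplicial complexes with vertex sets X and Y respectively, and let f : X → Y be a continuous map whose image has finite diameter, such that the induced map f̃ : K^m → L^m on metric thickenings exists (f̃(Σ λ_i δ_{x_i}) = Σ λ_i δ_{f(x_i)}). Then f̃ is continuous with respect to the 1-Wasserstein metrics. -/
open MeasureTheory
open scoped ENNReal

noncomputable section

/-- An (abstract) simplicial complex whose vertex set is all of `X`. -/
structure SimpComplex (X : Type*) where
  faces : Set (Finset X)
  singleton_mem : ∀ x : X, {x} ∈ faces
  down_closed : ∀ s ∈ faces, ∀ t : Finset X, t ⊆ s → t.Nonempty → t ∈ faces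

/-- The metric thickening `K^m` of a simplicial complex `K` with vertex set `X`:
all finitely supported probability measures on `X` whose support is a simplex of `K`. -/
def thick {X : Type*} [MeasurableSpace X] (K : SimpComplex X) : Set (Measure X) :=
  {μ | ∃ (s : Finset X) (w : X → ℝ), s ∈ K.faces ∧ (∀ x ∈ s, 0 < w x) ∧
    (∑ x ∈ s, w x) = 1 ∧ μ = ∑ x ∈ s, ENNReal.ofReal (w x) • Measure.dirac x}

/-- The set of transport plans (couplings) between two measures. -/
def couplings {X : Type*} [MeasurableSpace X] (μ ν : Measure X) : Set (Measure (X × X)) :=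
  {π | π.map Prod.fst = μ ∧ π.map Prod.snd = ν}

/-- The 1-Wasserstein (optimal transport) distance between two measures on a metric space. -/
def W1 {X : Type*} [MetricSpace X] [MeasurableSpace X] (μ ν : Measure X) : ℝ≥0∞ :=
  ⨅ π ∈ couplings μ ν, ∫⁻ p, edist p.1 p.2 ∂π

/-- The topology on measures induced by the 1-Wasserstein distance (generated by W1-balls). -/
def W1Top (X : Type*) [MetricSpace X] [MeasurableSpace X] : TopologicalSpace (Measure X) :=
  TopologicalSpace.generateFrom
    {B | ∃ (μ : Measure X) (ε : ℝ), 0 < ε ∧ B = {ν | W1 μ ν < ENNReal.ofReal ε}}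


section AtomicFacts

variable {Z : Type*} [MeasurableSpace Z] [MeasurableSingletonClass Z]

omit [MeasurableSingletonClass Z] in
lemma atomic_apply (t : Finset Z) (w : Z → ℝ) {A : Set Z} (hA : MeasurableSet A) :
    (∑ x ∈ t, ENNReal.ofReal (w x) • Measure.dirac x) A
      = ∑ x ∈ t, ENNReal.ofReal (w x) * A.indicator 1 x := by
  rw [Measure.finset_sum_apply]
  exact Finset.sum_congr rfl fun x _ => by
    rw [Measure.smul_apply, Measure.dirac_apply' _ hA, smul_eq_mul]

omit [MeasurableSingletonClass Z] in
lemma atomic_univ (t : Finset Z) (w : Z → ℝ) (hw : ∀ x ∈ t, 0 ≤ w x)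
    (hsum : ∑ x ∈ t, w x = 1) :
    (∑ x ∈ t, ENNReal.ofReal (w x) • Measure.dirac x) Set.univ = 1 := by
  rw [atomic_apply t w MeasurableSet.univ]
  have h : ∀ x ∈ t, ENNReal.ofReal (w x) * Set.indicator Set.univ (1 : Z → ℝ≥0∞) x
      = ENNReal.ofReal (w x) := fun x _ => by simp
  rw [Finset.sum_congr rfl h, ← ENNReal.ofReal_sum_of_nonneg hw, hsum, ENNReal.ofReal_one]

lemma atomic_compl (t : Finset Z) (w : Z → ℝ) :
    (∑ x ∈ t, ENNReal.ofReal (w x) • Measure.dirac x) ((↑t : Set Z)ᶜ) = 0 := by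
  rw [atomic_apply t w t.measurableSet.compl]
  refine Finset.sum_eq_zero fun x hx => ?_
  rw [Set.indicator_of_notMem (by simpa using hx), mul_zero]

lemma atomic_singleton (t : Finset Z) (w : Z → ℝ) {y : Z} (hy : y ∈ t) :
    (∑ x ∈ t, ENNReal.ofReal (w x) • Measure.dirac x) {y} = ENNReal.ofReal (w y) := by
  rw [atomic_apply t w (measurableSet_singleton y)]
  rw [Finset.sum_eq_single_of_mem y hy]
  · simp
  · intro x _ hxy
    rw [Set.indicator_of_notMem (by simpa using hxy), mul_zero]

end AtomicFacts


section MainLemmas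

variable {Y : Type*} [MetricSpace Y] [MeasurableSpace Y] [BorelSpace Y]

omit [BorelSpace Y] in
lemma W1_le {μ ν : Measure Y} {π : Measure (Y × Y)} (hπ : π ∈ couplings μ ν) :
    W1 μ ν ≤ ∫⁻ p, edist p.1 p.2 ∂π :=
  iInf₂_le π hπ

omit [BorelSpace Y] in
lemma exists_coupling_cost_lt {μ ν : Measure Y} {c : ℝ≥0∞} (h : W1 μ ν < c) :
    ∃ π ∈ couplings μ ν, (∫⁻ p, edist p.1 p.2 ∂π) < c := by
  rw [W1] at h
  simpa [iInf_lt_iff] using h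

lemma glue (ν₀ ρ m : Measure Y) (s : Finset Y) (w : Y → ℝ)
    (hw : ∀ y ∈ s, 0 < w y)
    (hms : ∀ y ∈ s, m {y} = ENNReal.ofReal (w y))
    (hmc : m ((↑s : Set Y)ᶜ) = 0)
    (π₁ π₂ : Measure (Y × Y)) (h₁ : π₁ ∈ couplings ν₀ m) (h₂ : π₂ ∈ couplings m ρ) :
    W1 ν₀ ρ ≤ (∫⁻ p, edist p.1 p.2 ∂π₁) + ∫⁻ p, edist p.1 p.2 ∂π₂ := by
  classical
  set S : Y → Set (Y × Y) := fun y => Prod.snd ⁻¹' {y} with hSdef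
  set T : Y → Set (Y × Y) := fun y => Prod.fst ⁻¹' {y} with hTdef
  have hSm : ∀ y, MeasurableSet (S y) := fun y => measurable_snd (measurableSet_singleton y)
  have hTm : ∀ y, MeasurableSet (T y) := fun y => measurable_fst (measurableSet_singleton y)
  have hπ₁S : ∀ y, π₁ (S y) = m {y} := by
    intro y
    rw [hSdef, ← Measure.map_apply measurable_snd (measurableSet_singleton y), h₁.2]
  have hπ₂T : ∀ y, π₂ (T y) = m {y} := by
    intro y
    rw [hTdef, ← Measure.map_apply measurable_fst (measurableSet_singleton y), h₂.1]
  set α : Y → Measure Y := fun y => (π₁.restrict (S y)).map Prod.fst with hαdef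
  set κ : Y → Measure Y := fun y => (π₂.restrict (T y)).map Prod.snd with hκdef
  have hαA : ∀ y, ∀ A : Set Y, MeasurableSet A → α y A = π₁ (Prod.fst ⁻¹' A ∩ S y) := by
    intro y A hA
    rw [hαdef, Measure.map_apply measurable_fst hA,
      Measure.restrict_apply (measurable_fst hA)]
  have hκA : ∀ y, ∀ A : Set Y, MeasurableSet A → κ y A = π₂ (Prod.snd ⁻¹' A ∩ T y) := by
    intro y A hA
    rw [hκdef, Measure.map_apply measurable_snd hA,
      Measure.restrict_apply (measurable_snd hA)]
  have hαu : ∀ y, α y Set.univ = m {y} := by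
    intro y
    rw [hαA y Set.univ MeasurableSet.univ, Set.preimage_univ, Set.univ_inter, hπ₁S]
  have hκu : ∀ y, κ y Set.univ = m {y} := by
    intro y
    rw [hκA y Set.univ MeasurableSet.univ, Set.preimage_univ, Set.univ_inter, hπ₂T]
  have hm0 : ∀ y ∈ s, m {y} ≠ 0 := fun y hy => by
    rw [hms y hy]; simpa using (ENNReal.ofReal_pos.mpr (hw y hy)).ne'
  have hmtop : ∀ y ∈ s, m {y} ≠ ⊤ := fun y hy => by
    rw [hms y hy]; exact ENNReal.ofReal_ne_top
  have hκfin : ∀ y ∈ s, IsFiniteMeasure (κ y) := fun y hy =>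
    ⟨by rw [hκu y]; exact (hmtop y hy).lt_top⟩
  have hαfin : ∀ y ∈ s, IsFiniteMeasure (α y) := fun y hy =>
    ⟨by rw [hαu y]; exact (hmtop y hy).lt_top⟩
  set π : Measure (Y × Y) := ∑ y ∈ s, (m {y})⁻¹ • ((α y).prod (κ y)) with hπdef
  have hSdisj : (↑s : Set Y).PairwiseDisjoint S := by
    intro a _ b _ hab
    refine Set.disjoint_left.mpr fun p hpa hpb => hab ?_
    have h1 : p.2 = a := hpa
    have h2 : p.2 = b := hpb
    rw [← h1, h2]
  have hTdisj : (↑s : Set Y).PairwiseDisjoint T := by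
    intro a _ b _ hab
    refine Set.disjoint_left.mpr fun p hpa hpb => hab ?_
    have h1 : p.1 = a := hpa
    have h2 : p.1 = b := hpb
    rw [← h1, h2]
  have hdisjS : ∀ B : Set (Y × Y), (↑s : Set Y).PairwiseDisjoint (fun y => B ∩ S y) :=
    fun B a ha b hb hab =>
      (hSdisj ha hb hab).mono Set.inter_subset_right Set.inter_subset_right
  have hdisjT : ∀ B : Set (Y × Y), (↑s : Set Y).PairwiseDisjoint (fun y => B ∩ T y) :=
    fun B a ha b hb hab =>
      (hTdisj ha hb hab).mono Set.inter_subset_right Set.inter_subset_right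
  have hπ₁c : π₁ ((Prod.snd ⁻¹' (↑s : Set Y))ᶜ) = 0 := by
    rw [← Set.preimage_compl, ← Measure.map_apply measurable_snd s.measurableSet.compl, h₁.2]
    exact hmc
  have hπ₂c : π₂ ((Prod.fst ⁻¹' (↑s : Set Y))ᶜ) = 0 := by
    rw [← Set.preimage_compl, ← Measure.map_apply measurable_fst s.measurableSet.compl, h₂.1]
    exact hmc
  -- π is a coupling
  have hmem : π ∈ couplings ν₀ ρ := by
    constructor
    · rw [← h₁.1]
      refine Measure.ext fun A hA => ?_
      rw [Measure.map_apply measurable_fst hA, Measure.map_apply measurable_fst hA, hπdef,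
        Measure.finset_sum_apply]
      have hterm : ∀ y ∈ s, ((m {y})⁻¹ • ((α y).prod (κ y))) (Prod.fst ⁻¹' A) = α y A := by
        intro y hy
        haveI := hκfin y hy
        rw [Measure.smul_apply, smul_eq_mul, ← Set.prod_univ, Measure.prod_prod, hκu y,
          mul_comm (α y A), ← mul_assoc, ENNReal.inv_mul_cancel (hm0 y hy) (hmtop y hy), one_mul]
      rw [Finset.sum_congr rfl hterm]
      have hsum2 : ∑ y ∈ s, α y A = π₁ (Prod.fst ⁻¹' A ∩ Prod.snd ⁻¹' (↑s : Set Y)) := by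
        rw [Finset.sum_congr rfl (fun y _ => hαA y A hA),
          ← measure_biUnion_finset (hdisjS (Prod.fst ⁻¹' A))
            (fun y _ => (measurable_fst hA).inter (hSm y))]
        congr 1
        ext p
        simp [hSdef, and_comm]
      rw [hsum2, ← measure_inter_add_diff (Prod.fst ⁻¹' A)
        (measurable_snd s.measurableSet : MeasurableSet (Prod.snd ⁻¹' (↑s : Set Y)))]
      have hdiff : π₁ (Prod.fst ⁻¹' A \ Prod.snd ⁻¹' (↑s : Set Y)) = 0 :=
        measure_mono_null (Set.diff_subset_compl _ _) hπ₁c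
      rw [hdiff, add_zero]
    · rw [← h₂.2]
      refine Measure.ext fun A hA => ?_
      rw [Measure.map_apply measurable_snd hA, Measure.map_apply measurable_snd hA, hπdef,
        Measure.finset_sum_apply]
      have hterm : ∀ y ∈ s, ((m {y})⁻¹ • ((α y).prod (κ y))) (Prod.snd ⁻¹' A) = κ y A := by
        intro y hy
        haveI := hκfin y hy
        rw [Measure.smul_apply, smul_eq_mul, ← Set.univ_prod, Measure.prod_prod, hαu y,
          ← mul_assoc, ENNReal.inv_mul_cancel (hm0 y hy) (hmtop y hy), one_mul]
      rw [Finset.sum_congr rfl hterm]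
      have hsum2 : ∑ y ∈ s, κ y A = π₂ (Prod.snd ⁻¹' A ∩ Prod.fst ⁻¹' (↑s : Set Y)) := by
        rw [Finset.sum_congr rfl (fun y _ => hκA y A hA),
          ← measure_biUnion_finset (hdisjT (Prod.snd ⁻¹' A))
            (fun y _ => (measurable_snd hA).inter (hTm y))]
        congr 1
        ext p
        simp [hTdef, and_comm]
      rw [hsum2, ← measure_inter_add_diff (Prod.snd ⁻¹' A)
        (measurable_fst s.measurableSet : MeasurableSet (Prod.fst ⁻¹' (↑s : Set Y)))]
      have hdiff : π₂ (Prod.snd ⁻¹' A \ Prod.fst ⁻¹' (↑s : Set Y)) = 0 :=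
        measure_mono_null (Set.diff_subset_compl _ _) hπ₂c
      rw [hdiff, add_zero]
  -- cost bound
  refine le_trans (W1_le hmem) ?_
  rw [hπdef, lintegral_finset_sum_measure]
  have hcost : ∀ y ∈ s,
      (∫⁻ p, edist p.1 p.2 ∂((m {y})⁻¹ • ((α y).prod (κ y))))
        ≤ (∫⁻ u, edist u y ∂(α y)) + ∫⁻ v, edist y v ∂(κ y) := by
    intro y hy
    haveI := hαfin y hy
    haveI := hκfin y hy
    rw [lintegral_smul_measure]
    have hmono : (∫⁻ p, edist p.1 p.2 ∂((α y).prod (κ y)))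
        ≤ ∫⁻ p : Y × Y, edist p.1 y + edist y p.2 ∂((α y).prod (κ y)) :=
      lintegral_mono fun p => edist_triangle _ _ _
    have hmeas1 : Measurable fun u : Y => edist u y := (continuous_id.edist continuous_const).measurable
    have hmeas2 : Measurable fun v : Y => edist y v := (continuous_const.edist continuous_id).measurable
    have hmeasp : Measurable fun p : Y × Y => edist p.1 y + edist y p.2 :=
      (hmeas1.comp measurable_fst).add (hmeas2.comp measurable_snd)
    have hprod : (∫⁻ p : Y × Y, edist p.1 y + edist y p.2 ∂((α y).prod (κ y)))
        = (∫⁻ u, edist u y ∂(α y)) * m {y} + m {y} * ∫⁻ v, edist y v ∂(κ y) := by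
      rw [lintegral_prod _ hmeasp.aemeasurable]
      have hinner : ∀ u : Y, (∫⁻ v, edist u y + edist y v ∂(κ y))
          = edist u y * m {y} + ∫⁻ v, edist y v ∂(κ y) := by
        intro u
        rw [lintegral_add_left measurable_const, lintegral_const, hκu y]
      rw [lintegral_congr hinner,
        lintegral_add_right _ measurable_const, lintegral_const, hαu y,
        lintegral_mul_const _ hmeas1, mul_comm (m {y})]
    calc (m {y})⁻¹ * ∫⁻ p, edist p.1 p.2 ∂((α y).prod (κ y))
        ≤ (m {y})⁻¹ * ((∫⁻ u, edist u y ∂(α y)) * m {y} + m {y} * ∫⁻ v, edist y v ∂(κ y)) := by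
          exact mul_le_mul_right (hprod ▸ hmono) _
      _ = (∫⁻ u, edist u y ∂(α y)) + ∫⁻ v, edist y v ∂(κ y) := by
          rw [mul_add, mul_comm (∫⁻ u, edist u y ∂(α y)) (m {y}), ← mul_assoc, ← mul_assoc,
            ENNReal.inv_mul_cancel (hm0 y hy) (hmtop y hy), one_mul, one_mul]
  refine le_trans (Finset.sum_le_sum hcost) ?_
  rw [Finset.sum_add_distrib]
  have hI1 : (∑ y ∈ s, ∫⁻ u, edist u y ∂(α y)) ≤ ∫⁻ p, edist p.1 p.2 ∂π₁ := by
    have heach : ∀ y ∈ s, (∫⁻ u, edist u y ∂(α y))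
        = ∫⁻ p, edist p.1 p.2 ∂(π₁.restrict (S y)) := by
      intro y _
      have hmeas1 : Measurable fun u : Y => edist u y :=
        (continuous_id.edist continuous_const).measurable
      simp only [hαdef]
      rw [lintegral_map hmeas1 measurable_fst]
      refine setLIntegral_congr_fun (hSm y) (fun p hp => ?_)
      have : p.2 = y := hp
      rw [this]
    rw [Finset.sum_congr rfl heach]
    have hle : (∑ y ∈ s, π₁.restrict (S y)) ≤ π₁ := by
      rw [Measure.le_iff]
      intro A hA
      rw [Measure.finset_sum_apply]
      have : ∀ y ∈ s, (π₁.restrict (S y)) A = π₁ (A ∩ S y) := fun y _ =>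
        Measure.restrict_apply hA
      rw [Finset.sum_congr rfl this,
        ← measure_biUnion_finset (hdisjS A) (fun y _ => hA.inter (hSm y))]
      exact measure_mono (by simp)
    calc (∑ y ∈ s, ∫⁻ p, edist p.1 p.2 ∂(π₁.restrict (S y)))
        = ∫⁻ p, edist p.1 p.2 ∂(∑ y ∈ s, π₁.restrict (S y)) :=
          (lintegral_finset_sum_measure s _ _).symm
      _ ≤ ∫⁻ p, edist p.1 p.2 ∂π₁ := lintegral_mono' hle (le_refl _)
  have hI2 : (∑ y ∈ s, ∫⁻ v, edist y v ∂(κ y)) ≤ ∫⁻ p, edist p.1 p.2 ∂π₂ := by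
    have heach : ∀ y ∈ s, (∫⁻ v, edist y v ∂(κ y))
        = ∫⁻ p, edist p.1 p.2 ∂(π₂.restrict (T y)) := by
      intro y _
      have hmeas2 : Measurable fun v : Y => edist y v :=
        (continuous_const.edist continuous_id).measurable
      simp only [hκdef]
      rw [lintegral_map hmeas2 measurable_snd]
      refine setLIntegral_congr_fun (hTm y) (fun p hp => ?_)
      have : p.1 = y := hp
      rw [this]
    rw [Finset.sum_congr rfl heach]
    have hle : (∑ y ∈ s, π₂.restrict (T y)) ≤ π₂ := by
      rw [Measure.le_iff]
      intro A hA
      rw [Measure.finset_sum_apply]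
      have : ∀ y ∈ s, (π₂.restrict (T y)) A = π₂ (A ∩ T y) := fun y _ =>
        Measure.restrict_apply hA
      rw [Finset.sum_congr rfl this,
        ← measure_biUnion_finset (hdisjT A) (fun y _ => hA.inter (hTm y))]
      exact measure_mono (by simp)
    calc (∑ y ∈ s, ∫⁻ p, edist p.1 p.2 ∂(π₂.restrict (T y)))
        = ∫⁻ p, edist p.1 p.2 ∂(∑ y ∈ s, π₂.restrict (T y)) :=
          (lintegral_finset_sum_measure s _ _).symm
      _ ≤ ∫⁻ p, edist p.1 p.2 ∂π₂ := lintegral_mono' hle (le_refl _)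
  exact add_le_add hI1 hI2


lemma W1_triangle_atomic (ν₀ ρ m : Measure Y) (s : Finset Y) (w : Y → ℝ)
    (hw : ∀ y ∈ s, 0 < w y)
    (hms : ∀ y ∈ s, m {y} = ENNReal.ofReal (w y))
    (hmc : m ((↑s : Set Y)ᶜ) = 0) :
    W1 ν₀ ρ ≤ W1 ν₀ m + W1 m ρ := by
  refine ENNReal.le_of_forall_pos_le_add fun ε hε hlt => ?_
  have h1t : W1 ν₀ m ≠ ⊤ := fun h => by simp [h] at hlt
  have h2t : W1 m ρ ≠ ⊤ := fun h => by simp [h] at hlt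
  have hε2 : ((ε : ℝ≥0∞) / 2) ≠ 0 := by
    simp [ENNReal.div_eq_top, hε.ne']
  have h1 : W1 ν₀ m < W1 ν₀ m + (ε : ℝ≥0∞) / 2 := ENNReal.lt_add_right h1t hε2
  have h2 : W1 m ρ < W1 m ρ + (ε : ℝ≥0∞) / 2 := ENNReal.lt_add_right h2t hε2
  rw [W1] at h1 h2
  simp only [iInf_lt_iff] at h1 h2
  obtain ⟨π₁, hπ₁mem, hπ₁⟩ := h1
  obtain ⟨π₂, hπ₂mem, hπ₂⟩ := h2
  calc W1 ν₀ ρ ≤ (∫⁻ p, edist p.1 p.2 ∂π₁) + ∫⁻ p, edist p.1 p.2 ∂π₂ :=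
        glue ν₀ ρ m s w hw hms hmc π₁ π₂ hπ₁mem hπ₂mem
    _ ≤ (W1 ν₀ m + (ε : ℝ≥0∞) / 2) + (W1 m ρ + (ε : ℝ≥0∞) / 2) :=
        add_le_add hπ₁.le hπ₂.le
    _ = W1 ν₀ m + W1 m ρ + ε := by
        rw [add_assoc, add_comm ((ε : ℝ≥0∞) / 2), add_assoc, ENNReal.add_halves, ← add_assoc]

lemma pushforward_cost_small {X : Type*} [MetricSpace X] [MeasurableSpace X] [BorelSpace X]
    (f : X → Y) (hf : Continuous f) (hbdd : EMetric.diam (Set.range f) ≠ ⊤)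
    (μ₀ : Measure X) (t : Finset X) (v : X → ℝ) (hv : ∀ x ∈ t, 0 < v x)
    (hsum : ∑ x ∈ t, v x = 1)
    (hμ₀c : μ₀ ((↑t : Set X)ᶜ) = 0) (hμ₀u : μ₀ Set.univ = 1)
    (r : ℝ≥0∞) (hr0 : r ≠ 0) (hrt : r ≠ ⊤) :
    ∃ δ : ℝ, 0 < δ ∧ ∀ μ : Measure X, W1 μ₀ μ < ENNReal.ofReal δ →
      W1 (μ₀.map f) (μ.map f) ≤ r := by
  classical
  have htne : t.Nonempty := by
    rcases t.eq_empty_or_nonempty with h | h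
    · rw [h] at hsum; simp at hsum
    · exact h
  have he0 : r / 2 ≠ 0 := by
    simp [ENNReal.div_eq_zero_iff, hr0]
  have het : r / 2 ≠ ⊤ := by
    simp [ENNReal.div_eq_top, hrt]
  -- continuity moduli at the atoms
  have hc : ∀ x : X, ∃ d : ℝ≥0∞, 0 < d ∧
      ∀ x' : X, edist x' x < d → edist (f x') (f x) < r / 2 := by
    intro x
    have h := (EMetric.nhds_basis_eball.tendsto_iff EMetric.nhds_basis_eball).mp
      (hf.continuousAt (x := x)) (r / 2) (pos_iff_ne_zero.mpr he0)
    obtain ⟨d, hd0, hd⟩ := h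
    exact ⟨d, hd0, fun x' hx' => EMetric.mem_ball.mp (hd x' (EMetric.mem_ball.mpr hx'))⟩
  choose d hd0 hdp using hc
  set δ' : ℝ≥0∞ := min (t.inf' htne d) 1 with hδ'def
  have hδ'0 : δ' ≠ 0 := by
    have : (0 : ℝ≥0∞) < δ' := lt_min (by rw [Finset.lt_inf'_iff]; exact fun x _ => hd0 x)
      zero_lt_one
    exact this.ne'
  have hδ't : δ' ≠ ⊤ := ((min_le_right _ _).trans_lt ENNReal.one_lt_top).ne
  have hδ'le : ∀ x ∈ t, δ' ≤ d x := fun x hx => (min_le_left _ _).trans (Finset.inf'_le d hx)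
  set D : ℝ≥0∞ := EMetric.diam (Set.range f) with hDdef
  have hD1 : D + 1 ≠ ⊤ := ENNReal.add_ne_top.mpr ⟨hbdd, ENNReal.one_ne_top⟩
  set q : ℝ≥0∞ := (r / 2) / (D + 1) with hqdef
  have hq0 : q ≠ 0 := (ENNReal.div_pos he0 hD1).ne'
  have hqt : q ≠ ⊤ := by
    simp [hqdef, ENNReal.div_eq_top, het]
  set θ : ℝ≥0∞ := δ' * q with hθdef
  have hθ0 : θ ≠ 0 := (ENNReal.mul_pos hδ'0 hq0).ne'
  have hθt : θ ≠ ⊤ := ENNReal.mul_ne_top hδ't hqt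
  refine ⟨θ.toReal, ENNReal.toReal_pos hθ0 hθt, fun μ hμ => ?_⟩
  rw [ENNReal.ofReal_toReal hθt] at hμ
  obtain ⟨π, hπmem, hπcost⟩ := exists_coupling_cost_lt hμ
  have hfm : Measurable f := hf.measurable
  have hffm : Measurable (Prod.map f f) := hfm.prodMap hfm
  -- the pushed-forward coupling
  have hmem' : π.map (Prod.map f f) ∈ couplings (μ₀.map f) (μ.map f) := by
    constructor
    · rw [Measure.map_map measurable_fst hffm,
        show (Prod.fst ∘ Prod.map f f : X × X → Y) = f ∘ Prod.fst from rfl,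
        ← Measure.map_map hfm measurable_fst, hπmem.1]
    · rw [Measure.map_map measurable_snd hffm,
        show (Prod.snd ∘ Prod.map f f : X × X → Y) = f ∘ Prod.snd from rfl,
        ← Measure.map_map hfm measurable_snd, hπmem.2]
  refine le_trans (W1_le hmem') ?_
  refine le_trans (lintegral_map_le _ _) ?_
  simp only [Prod.map_fst, Prod.map_snd]
  -- now bound ∫⁻ p, edist (f p.1) (f p.2) ∂π
  set T : X → Set (X × X) := fun x => Prod.fst ⁻¹' {x} with hTdef
  have hTm : ∀ x, MeasurableSet (T x) := fun x => measurable_fst (measurableSet_singleton x)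
  have hTpd : (↑t : Set X).PairwiseDisjoint T := by
    intro a _ b _ hab
    refine Set.disjoint_left.mpr fun p hpa hpb => hab ?_
    have h1 : p.1 = a := hpa
    have h2 : p.1 = b := hpb
    rw [← h1, h2]
  have hTdisj : ∀ B : Set (X × X), (↑t : Set X).PairwiseDisjoint (fun x => B ∩ T x) :=
    fun B a ha b hb hab =>
      (hTpd ha hb hab).mono Set.inter_subset_right Set.inter_subset_right
  have hUm : MeasurableSet ((Prod.fst ⁻¹' (↑t : Set X) : Set (X × X))) := measurable_fst t.measurableSet
  have hπc : π (((Prod.fst ⁻¹' (↑t : Set X) : Set (X × X)))ᶜ) = 0 := by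
    rw [← Set.preimage_compl,
      ← Measure.map_apply (measurable_fst : Measurable (Prod.fst : X × X → X))
        t.measurableSet.compl, hπmem.1]
    exact hμ₀c
  have hπU : ∀ B : Set (X × X), MeasurableSet B →
      π B = ∑ x ∈ t, π (B ∩ T x) := by
    intro B hB
    rw [← measure_biUnion_finset (hTdisj B) (fun x _ => hB.inter (hTm x))]
    have hBeq : (⋃ x ∈ t, B ∩ T x) = B ∩ (Prod.fst ⁻¹' (↑t : Set X) : Set (X × X)) := by
      ext p; simp [hTdef, and_comm]
    rw [hBeq, ← measure_inter_add_diff B hUm]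
    have : π (B \ (Prod.fst ⁻¹' (↑t : Set X) : Set (X × X))) = 0 :=
      measure_mono_null (Set.diff_subset_compl _ _) hπc
    rw [this, add_zero]
  have hπu1 : π Set.univ = 1 := by
    have : π Set.univ = (π.map Prod.fst) Set.univ := by
      rw [Measure.map_apply measurable_fst MeasurableSet.univ, Set.preimage_univ]
    rw [this, hπmem.1, hμ₀u]
  -- decompose the integral over the atoms of μ₀
  have hrestr : π.restrict ((Prod.fst ⁻¹' (↑t : Set X) : Set (X × X))) = ∑ x ∈ t, π.restrict (T x) := by
    refine Measure.ext fun B hB => ?_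
    rw [Measure.restrict_apply hB, Measure.finset_sum_apply]
    have h1 : ∀ x ∈ t, (π.restrict (T x)) B = π (B ∩ T x) := fun x _ =>
      Measure.restrict_apply hB
    rw [Finset.sum_congr rfl h1, ← hπU B hB, ← measure_inter_add_diff B hUm]
    have : π (B \ (Prod.fst ⁻¹' (↑t : Set X) : Set (X × X))) = 0 :=
      measure_mono_null (Set.diff_subset_compl _ _) hπc
    rw [this, add_zero]
  have hsplit : (∫⁻ p : X × X, edist (f p.1) (f p.2) ∂π)
      = ∑ x ∈ t, ∫⁻ p in T x, edist (f p.1) (f p.2) ∂π := by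
    have h0 : (∫⁻ p : X × X, edist (f p.1) (f p.2) ∂π)
        = ∫⁻ p : X × X, edist (f p.1) (f p.2)
            ∂(π.restrict (Prod.fst ⁻¹' (↑t : Set X) : Set (X × X))
              + π.restrict ((Prod.fst ⁻¹' (↑t : Set X) : Set (X × X))ᶜ)) := by
      rw [Measure.restrict_add_restrict_compl hUm]
    rw [h0, lintegral_add_measure, Measure.restrict_eq_zero.mpr hπc, lintegral_zero_measure,
      add_zero, hrestr, lintegral_finset_sum_measure]
  rw [hsplit]
  -- per-atom bound
  set B : X → Set (X × X) := fun x => {p : X × X | δ' ≤ edist x p.2} with hBdef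
  have hBm : ∀ x, MeasurableSet (B x) :=
    fun x => measurableSet_le measurable_const
      (((continuous_const.edist continuous_id).measurable :
          Measurable fun u : X => edist x u).comp measurable_snd)
  have hbound : ∀ x ∈ t, ∀ p : X × X,
      edist (f x) (f p.2) ≤ r / 2 + (B x).indicator (fun _ => D) p := by
    intro x hx p
    by_cases hp : p ∈ B x
    · rw [Set.indicator_of_mem hp]
      exact le_add_left (EMetric.edist_le_diam_of_mem ⟨x, rfl⟩ ⟨p.2, rfl⟩)
    · rw [Set.indicator_of_notMem hp, add_zero]
      have h1 : edist p.2 x < d x := by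
        rw [edist_comm]
        exact lt_of_lt_of_le (not_le.mp hp) (hδ'le x hx)
      have := hdp x p.2 h1
      rw [edist_comm] at this
      exact this.le
  have hperatom : ∀ x ∈ t, (∫⁻ p in T x, edist (f p.1) (f p.2) ∂π)
      ≤ r / 2 * π (T x) + D * π (B x ∩ T x) := by
    intro x hx
    have hcongr : (∫⁻ p in T x, edist (f p.1) (f p.2) ∂π)
        = ∫⁻ p in T x, edist (f x) (f p.2) ∂π := by
      refine setLIntegral_congr_fun (hTm x) (fun p hp => ?_)
      have : p.1 = x := hp
      rw [this]
    rw [hcongr]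
    calc (∫⁻ p in T x, edist (f x) (f p.2) ∂π)
        ≤ ∫⁻ p in T x, (r / 2 + (B x).indicator (fun _ => D) p) ∂π :=
          lintegral_mono fun p => hbound x hx p
      _ = r / 2 * π (T x) + D * π (B x ∩ T x) := by
          rw [lintegral_add_left measurable_const, lintegral_const,
            Measure.restrict_apply_univ, lintegral_indicator (hBm x),
            Measure.restrict_restrict (hBm x), setLIntegral_const]
  refine le_trans (Finset.sum_le_sum hperatom) ?_
  rw [Finset.sum_add_distrib, ← Finset.mul_sum, ← Finset.mul_sum]
  -- first summand
  have hfirst : r / 2 * (∑ x ∈ t, π (T x)) ≤ r / 2 := by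
    have : (∑ x ∈ t, π (T x)) ≤ 1 := by
      have h1 : ∀ x ∈ t, π (T x) = π (Set.univ ∩ T x) := fun x _ => by rw [Set.univ_inter]
      rw [Finset.sum_congr rfl h1, ← hπU Set.univ MeasurableSet.univ, hπu1]
    calc r / 2 * (∑ x ∈ t, π (T x)) ≤ r / 2 * 1 := mul_le_mul_right this _
      _ = r / 2 := mul_one _
  -- second summand: Markov-type bound
  have hmarkov : δ' * (∑ x ∈ t, π (B x ∩ T x)) ≤ ∫⁻ p : X × X, edist p.1 p.2 ∂π := by
    rw [Finset.mul_sum]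
    have hlow : ∀ x ∈ t, δ' * π (B x ∩ T x) ≤ ∫⁻ p in B x ∩ T x, edist p.1 p.2 ∂π := by
      intro x _
      have h1 : δ' * π (B x ∩ T x) = ∫⁻ _ in B x ∩ T x, δ' ∂π := by
        rw [setLIntegral_const]
      rw [h1]
      have h2 : (∫⁻ p in B x ∩ T x, edist p.1 p.2 ∂π)
          = ∫⁻ p in B x ∩ T x, edist x p.2 ∂π := by
        refine setLIntegral_congr_fun ((hBm x).inter (hTm x))
          (fun p hp => ?_)
        have : p.1 = x := hp.2
        rw [this]
      rw [h2]
      refine setLIntegral_mono (((continuous_const.edist continuous_id).measurable :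
        Measurable fun u : X => edist x u).comp measurable_snd) fun p hp => hp.1
    refine le_trans (Finset.sum_le_sum hlow) ?_
    have hle : (∑ x ∈ t, π.restrict (B x ∩ T x)) ≤ π := by
      rw [Measure.le_iff]
      intro A hA
      rw [Measure.finset_sum_apply]
      have h1 : ∀ x ∈ t, (π.restrict (B x ∩ T x)) A = π (A ∩ (B x ∩ T x)) := fun x _ =>
        Measure.restrict_apply hA
      have h2 : ∀ x ∈ t, π (A ∩ (B x ∩ T x)) ≤ π ((A ∩ B x) ∩ T x) := fun x _ =>
        measure_mono (by intro p hp; exact ⟨⟨hp.1, hp.2.1⟩, hp.2.2⟩)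
      calc (∑ x ∈ t, (π.restrict (B x ∩ T x)) A)
          ≤ ∑ x ∈ t, π ((A ∩ B x) ∩ T x) := by
            rw [Finset.sum_congr rfl h1]; exact Finset.sum_le_sum h2
        _ = π (⋃ x ∈ t, (A ∩ B x) ∩ T x) := by
            refine (measure_biUnion_finset (fun a ha b hb hab =>
              (hTpd ha hb hab).mono Set.inter_subset_right Set.inter_subset_right)
              (fun x _ => (hA.inter (hBm x)).inter (hTm x))).symm
        _ ≤ π A := by
            refine measure_mono ?_
            intro p hp
            simp only [Set.mem_iUnion] at hp
            obtain ⟨x, _, hx⟩ := hp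
            exact hx.1.1
    calc (∑ x ∈ t, ∫⁻ p in B x ∩ T x, edist p.1 p.2 ∂π)
        = ∫⁻ p, edist p.1 p.2 ∂(∑ x ∈ t, π.restrict (B x ∩ T x)) :=
          (lintegral_finset_sum_measure t _ _).symm
      _ ≤ ∫⁻ p, edist p.1 p.2 ∂π := lintegral_mono' hle (le_refl _)
  have hc2 : (∑ x ∈ t, π (B x ∩ T x)) ≤ q := by
    have h1 : δ' * (∑ x ∈ t, π (B x ∩ T x)) ≤ δ' * q := by
      refine le_trans hmarkov ?_
      rw [hθdef] at hπcost
      exact hπcost.le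
    exact (ENNReal.mul_le_mul_iff_right hδ'0 hδ't).mp h1
  have hsecond : D * (∑ x ∈ t, π (B x ∩ T x)) ≤ r / 2 := by
    calc D * (∑ x ∈ t, π (B x ∩ T x)) ≤ D * q := mul_le_mul_right hc2 _
      _ ≤ (D + 1) * q := mul_le_mul_left le_self_add _
      _ = r / 2 := by
        rw [hqdef, ENNReal.mul_div_cancel' (by simp) (fun h => absurd h hD1)]
  calc r / 2 * (∑ x ∈ t, π (T x)) + D * (∑ x ∈ t, π (B x ∩ T x))
      ≤ r / 2 + r / 2 := add_le_add hfirst hsecond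
    _ = r := ENNReal.add_halves r


end MainLemmas

section SelfDist

variable {Z : Type*} [MetricSpace Z] [MeasurableSpace Z] [BorelSpace Z]

lemma W1_self_atomic (μ : Measure Z) (t : Finset Z) (w : Z → ℝ)
    (hμ : μ = ∑ x ∈ t, ENNReal.ofReal (w x) • Measure.dirac x) : W1 μ μ = 0 := by
  classical
  refine le_antisymm ?_ zero_le
  have hd : Measurable (fun z : Z => (z, z)) := measurable_id.prodMk measurable_id
  have key : ∀ u : Finset Z, Measure.map (fun z : Z => (z, z))
      (∑ x ∈ u, ENNReal.ofReal (w x) • Measure.dirac x)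
      = ∑ x ∈ u, ENNReal.ofReal (w x) • Measure.dirac (x, x) := by
    intro u
    induction u using Finset.induction_on with
    | empty => simp
    | insert x u hnotmem ih =>
      rw [Finset.sum_insert hnotmem, Finset.sum_insert hnotmem, Measure.map_add _ _ hd,
        Measure.map_smul, Measure.map_dirac' hd, ih]
  have hmapeq : μ.map (fun z : Z => (z, z))
      = ∑ x ∈ t, ENNReal.ofReal (w x) • Measure.dirac (x, x) := by
    rw [hμ, key]
  have hmem : μ.map (fun z : Z => (z, z)) ∈ couplings μ μ := by
    constructor
    · rw [Measure.map_map measurable_fst hd]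
      exact Measure.map_id
    · rw [Measure.map_map measurable_snd hd]
      exact Measure.map_id
  refine le_trans (W1_le hmem) (le_of_eq ?_)
  rw [hmapeq, lintegral_finset_sum_measure]
  refine Finset.sum_eq_zero fun x _ => ?_
  rw [lintegral_smul_measure, lintegral_dirac]
  simp

end SelfDist

/-- If `X`, `Y` are metric spaces, `K`, `L` are simplicial complexes with vertex sets
`X`, `Y`, and `f : X → Y` is continuous with image of finite diameter and induces a map of
metric thickenings `K^m → L^m` (the pushforward of every measure of `K^m` lies in `L^m`),
then the induced map is continuous with respect to the 1-Wasserstein topologies. -/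
theorem stmt3 {X Y : Type*} [MetricSpace X] [MetricSpace Y]
    [MeasurableSpace X] [BorelSpace X] [MeasurableSpace Y] [BorelSpace Y]
    (K : SimpComplex X) (L : SimpComplex Y) (f : X → Y) (hf : Continuous f)
    (hbdd : EMetric.diam (Set.range f) ≠ ⊤)
    (hind : ∀ μ ∈ thick K, μ.map f ∈ thick L) :
    @ContinuousOn (Measure X) (Measure Y) (W1Top X) (W1Top Y)
      (fun μ => μ.map f) (thick K) := by
  letI : TopologicalSpace (Measure X) := W1Top X
  letI : TopologicalSpace (Measure Y) := W1Top Y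
  intro μ₀ h₀
  obtain ⟨t, v, _htK, hv, hvsum, hμ₀⟩ := h₀
  obtain ⟨s, w, _hsL, hw, _hwsum, hmap⟩ := hind μ₀ ⟨t, v, _htK, hv, hvsum, hμ₀⟩
  show Filter.Tendsto (fun μ : Measure X => μ.map f) (nhdsWithin μ₀ (thick K))
    (@nhds _ (TopologicalSpace.generateFrom
      {B | ∃ (ν : Measure Y) (ε : ℝ), 0 < ε ∧ B = {ρ | W1 ν ρ < ENNReal.ofReal ε}})
      (μ₀.map f))
  rw [TopologicalSpace.tendsto_nhds_generateFrom_iff]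
  rintro B ⟨ν₀, ε, hε, rfl⟩ hmemB
  have hmemB' : W1 ν₀ (μ₀.map f) < ENNReal.ofReal ε := hmemB
  obtain ⟨rr, hrr0, hlt⟩ := ENNReal.lt_iff_exists_add_pos_lt.mp hmemB'
  obtain ⟨δ, hδ0, hδ⟩ := pushforward_cost_small f hf hbdd μ₀ t v hv hvsum
    (by rw [hμ₀]; exact atomic_compl t v)
    (by rw [hμ₀]; exact atomic_univ t v (fun x hx => (hv x hx).le) hvsum)
    (rr : ℝ≥0∞) (by exact_mod_cast hrr0.ne') ENNReal.coe_ne_top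
  refine mem_nhdsWithin.mpr ⟨{μ' | W1 μ₀ μ' < ENNReal.ofReal δ}, ?_, ?_, ?_⟩
  · exact TopologicalSpace.GenerateOpen.basic _ ⟨μ₀, δ, hδ0, rfl⟩
  · show W1 μ₀ μ₀ < ENNReal.ofReal δ
    rw [W1_self_atomic μ₀ t v hμ₀]
    exact ENNReal.ofReal_pos.mpr hδ0
  · rintro μ ⟨hμU, _hμK⟩
    show W1 ν₀ (μ.map f) < ENNReal.ofReal ε
    have h1 : W1 (μ₀.map f) (μ.map f) ≤ (rr : ℝ≥0∞) := hδ μ hμU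
    have htri : W1 ν₀ (μ.map f) ≤ W1 ν₀ (μ₀.map f) + W1 (μ₀.map f) (μ.map f) :=
      W1_triangle_atomic ν₀ (μ.map f) (μ₀.map f) s w hw
        (fun y hy => by rw [hmap]; exact atomic_singleton s w hy)
        (by rw [hmap]; exact atomic_compl s w)
    calc W1 ν₀ (μ.map f) ≤ W1 ν₀ (μ₀.map f) + W1 (μ₀.map f) (μ.map f) := htri
      _ ≤ W1 ν₀ (μ₀.map f) + (rr : ℝ≥0∞) := add_le_add_right h1 _
      _ < ENNReal.ofReal ε := hlt

end
end
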